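/- The operation H-tilde ⊗ I, where H-tilde is the toy Hadamard on R^4 and I is the 4×4 identity, maps the perfectly correlated two-toy-bit state Σ_i o_i ⊗ o_i to a vector that is not a valid epistemic state (not a nonnegative-integer combination of ontic basis vectors forming an epistemic state); hence H-tilde is validity-preserving but not completely validity-preserving. -/

import Mathlib

open Kronecker

/-- `v` represents a pure epistemic state of a toy bit: a `{0,1}`-vector in `ℝ⁴`
with exactly two entries equal to 1. -/
def IsPureToyState (v : Fin 4 → ℝ) : Prop :=
  (∀ i, v i = 0 ∨ v i = 1) ∧ (Finset.univ.filter (fun i => v i = 1)).card = 2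

/-- The toy Hadamard `H`-tilde. -/
noncomputable def HTilde : Matrix (Fin 4) (Fin 4) ℝ :=
  (1 / 2 : ℝ) • !![1, 1, 1, -1; 1, -1, 1, 1; 1, 1, -1, 1; -1, 1, 1, 1]

/-- The perfectly correlated two-toy-bit state `σ₀ = Σᵢ oᵢ ⊗ oᵢ` in `ℝ⁴ ⊗ ℝ⁴ ≅ ℝ¹⁶`. -/
def corrState : Fin 4 × Fin 4 → ℝ := fun p => if p.1 = p.2 then 1 else 0

/-- `H`-tilde `⊗ I` maps the perfectly correlated state `σ₀ = Σᵢ oᵢ ⊗ oᵢ` to a vector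
that is not a nonnegative-integer combination of the ontic basis vectors, hence not a
valid epistemic state; so `H`-tilde, while validity-preserving on one toy bit, is not
completely validity-preserving. -/
theorem stmt_13 :
    (∀ v : Fin 4 → ℝ, IsPureToyState v → IsPureToyState (HTilde.mulVec v)) ∧
    ¬ ∃ f : Fin 4 × Fin 4 → ℕ,
        (HTilde ⊗ₖ (1 : Matrix (Fin 4) (Fin 4) ℝ)).mulVec corrState =
          fun p => (f p : ℝ) := by
  constructor
  · rintro v ⟨h01, hcard⟩
    rw [Finset.card_filter, Fin.sum_univ_four] at hcard
    rcases h01 0 with h0 | h0 <;> rcases h01 1 with h1 | h1 <;>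
      rcases h01 2 with h2 | h2 <;> rcases h01 3 with h3 | h3 <;>
      simp [h0, h1, h2, h3] at hcard
    all_goals refine ⟨fun i => ?_, ?_⟩
    all_goals first
      | (fin_cases i <;>
          norm_num [Matrix.mulVec, dotProduct, Fin.sum_univ_four, HTilde, h0, h1, h2, h3,
            Matrix.cons_val_two, Matrix.cons_val_three, Matrix.vecHead, Matrix.vecTail])
      | (rw [Finset.card_filter, Fin.sum_univ_four]
         norm_num [Matrix.mulVec, dotProduct, Fin.sum_univ_four, HTilde, h0, h1, h2, h3,
            Matrix.cons_val_two, Matrix.cons_val_three, Matrix.vecHead, Matrix.vecTail])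
  · rintro ⟨f, hf⟩
    have h := congrFun hf (0, 0)
    simp [Matrix.mulVec, dotProduct, Fintype.sum_prod_type, Fin.sum_univ_four,
      corrState, HTilde, Matrix.one_apply, Matrix.kroneckerMap_apply] at h
    have h2 : (2 * f 0 : ℕ) = (1 : ℕ) := by
      have : (2 : ℝ) * (f 0 : ℝ) = 1 := by rw [← Prod.mk_zero_zero, ← h]; norm_num
      exact_mod_cast this
    omega
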